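/- Let λ > 0, L ≥ λ and C' ≥ 1/λ. Define the sequence (γ_k)_{k≥0} recursively by γ_0 = 1/L and γ_k = min{ γ_{k−1}, max{ C'/k, γ_{k−1}/(1 + λ) } } for k ≥ 1. Then: (a) the sequence satisfies γ_{k−1} ≥ γ_k ≥ γ_{k−1}/(1 + λ) for all k ≥ 1 and 0 < γ_k ≤ 1/L for all k; (b) there exists N such that γ_k = C'/k for all k > N; and (c) consequently γ_k → 0 and ∑_{k=0}^{∞} γ_k = ∞. -/

import Mathlib

open Filter

/-- The explicit step-size rule γ₀ = 1/L, γ_k = min{γ_{k-1}, max{C'/k, γ_{k-1}/(1+λ)}}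
satisfies the monotonicity, decay and divergence conditions of the decaying-step-size
convergence theorem (Remark 3.16 of the paper). -/
theorem stepsize_rule_properties
    (lam L C' : ℝ) (hlam : 0 < lam) (hL : lam ≤ L) (hC' : 1 / lam ≤ C')
    (γ : ℕ → ℝ) (hγ0 : γ 0 = 1 / L)
    (hγ : ∀ k : ℕ, γ (k + 1)
      = min (γ k) (max (C' / (k + 1 : ℕ)) (γ k / (1 + lam)))) :
    (∀ k : ℕ, γ (k + 1) ≤ γ k ∧ γ k / (1 + lam) ≤ γ (k + 1)) ∧
    (∀ k : ℕ, 0 < γ k ∧ γ k ≤ 1 / L) ∧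
    (∃ N : ℕ, ∀ k : ℕ, N < k → γ k = C' / k) ∧
    Tendsto γ atTop (nhds 0) ∧
    Tendsto (fun K : ℕ => ∑ k ∈ Finset.range K, γ k) atTop atTop := by
  have hL0 : (0:ℝ) < L := lt_of_lt_of_le hlam hL
  have hC0 : (0:ℝ) < C' := lt_of_lt_of_le (by positivity) hC'
  have h1l : (1:ℝ) < 1 + lam := by linarith
  have h1l0 : (0:ℝ) < 1 + lam := by linarith
  -- positivity
  have hpos : ∀ k, 0 < γ k := by
    intro k
    induction k with
    | zero => rw [hγ0]; positivity
    | succ n ih =>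
      rw [hγ n]
      exact lt_min ih (lt_max_of_lt_right (by positivity))
  -- monotonicity and decay bound
  have hmono : ∀ k, γ (k+1) ≤ γ k := fun k => (hγ k) ▸ min_le_left _ _
  have hlow : ∀ k, γ k / (1 + lam) ≤ γ (k+1) := by
    intro k
    rw [hγ k]
    exact le_min (div_le_self (hpos k).le h1l.le) (le_max_right _ _)
  have hub : ∀ k, γ k ≤ 1 / L := by
    intro k
    induction k with
    | zero => rw [hγ0]
    | succ n ih => exact (hmono n).trans ih
  -- lower invariant : γ (k+1) ≥ min (γ 0) (C'/(k+1))
  have hinv : ∀ k : ℕ, min (γ 0) (C' / ((k:ℝ)+1)) ≤ γ (k+1) := by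
    intro k
    induction k with
    | zero =>
      rw [hγ 0]
      refine min_le_min le_rfl (le_trans (le_of_eq ?_) (le_max_left _ _))
      norm_num
    | succ n ih =>
      rw [hγ (n+1)]
      push_cast
      refine le_min (le_trans (min_le_min le_rfl ?_) ih)
        (le_trans (min_le_right _ _) (le_max_left _ _))
      gcongr
      all_goals nlinarith [Nat.cast_nonneg (α := ℝ) n]
  -- choose a threshold k0
  set k0 : ℕ := max (⌈1/lam⌉₊) (⌈C'*L⌉₊) + 1 with hk0def
  have hk0pos : 0 < (k0:ℝ) := by positivity
  have hk0lam : 1 ≤ (k0:ℝ) * lam := by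
    have h1 : 1/lam ≤ (⌈1/lam⌉₊ : ℝ) := Nat.le_ceil _
    have h2 : ((⌈1/lam⌉₊:ℕ):ℝ) ≤ (k0:ℝ) := by
      exact_mod_cast Nat.le_of_lt (Nat.lt_succ_of_le (le_max_left _ _))
    have : 1/lam ≤ (k0:ℝ) := h1.trans h2
    calc (1:ℝ) = (1/lam) * lam := by field_simp
    _ ≤ (k0:ℝ) * lam := by gcongr
  have hk0C : ∀ k : ℕ, k0 ≤ k → C' / (k:ℝ) ≤ 1 / L := by
    intro k hk
    have h1 : C'*L ≤ (⌈C'*L⌉₊ : ℝ) := Nat.le_ceil _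
    have h2 : ((⌈C'*L⌉₊:ℕ):ℝ) ≤ (k:ℝ) := by
      exact_mod_cast le_trans (Nat.le_of_lt (Nat.lt_succ_of_le (le_max_right _ _))) hk
    have hkpos : (0:ℝ) < (k:ℝ) := lt_of_lt_of_le hk0pos (by exact_mod_cast hk)
    rw [div_le_div_iff₀ hkpos hL0]
    nlinarith
  -- for k ≥ k0 : C'/k ≤ γ k
  have hglow : ∀ k : ℕ, k0 ≤ k → C' / (k:ℝ) ≤ γ k := by
    intro k hk
    obtain ⟨mm, rfl⟩ : ∃ mm, k = mm + 1 := ⟨k - 1, by omega⟩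
    have h := hinv mm
    have hmin : min (γ 0) (C' / ((mm:ℝ)+1)) = C' / ((mm:ℝ)+1) := by
      apply min_eq_right
      rw [hγ0]
      have h2 := hk0C (mm+1) hk
      rwa [Nat.cast_add, Nat.cast_one] at h2
    rw [hmin] at h
    rwa [Nat.cast_add, Nat.cast_one]
  have hkge : ∀ k : ℕ, k0 ≤ k → 1 ≤ (k:ℝ) * lam := by
    intro k hk
    exact hk0lam.trans (mul_le_mul_of_nonneg_right (by exact_mod_cast hk) hlam.le)
  -- propagation of the equality γ k = C'/k
  have hstep : ∀ k : ℕ, k0 ≤ k → γ k = C' / (k:ℝ) → γ (k+1) = C' / ((k:ℝ)+1) := by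
    intro k hk heq
    have hkpos : (0:ℝ) < (k:ℝ) := lt_of_lt_of_le hk0pos (by exact_mod_cast hk)
    rw [hγ k, heq]
    push_cast
    have h1 : (C' / (k:ℝ)) / (1+lam) ≤ C' / ((k:ℝ)+1) := by
      rw [div_div]
      gcongr
      all_goals nlinarith [hkge k hk, hkpos]
    have h2 : C' / ((k:ℝ)+1) ≤ C' / (k:ℝ) := by gcongr; linarith
    rw [max_eq_left h1, min_eq_right h2]
  -- existence of a moment where γ k = C'/k
  have hex : ∃ m : ℕ, k0 ≤ m ∧ γ m = C' / (m:ℝ) := by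
    by_contra hcon
    push_neg at hcon
    have hdec : ∀ n : ℕ, γ (k0 + n + 1) ≤ γ (k0 + n) / (1 + lam) := by
      intro n
      have hle : γ (k0 + n + 1) ≤ max (C' / ((k0 + n : ℕ) + 1 : ℕ)) (γ (k0+n) / (1+lam)) :=
        (hγ (k0+n)) ▸ min_le_right _ _
      rcases le_max_iff.mp hle with h | h
      · exact absurd (le_antisymm h (hglow (k0 + n + 1) (by omega)))
          (hcon (k0 + n + 1) (by omega))
      · exact h
    have hgeo : ∀ n : ℕ, γ (k0 + n) ≤ γ k0 * ((1+lam)⁻¹)^n := by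
      intro n
      induction n with
      | zero => simp
      | succ m ih =>
        calc γ (k0 + m + 1) ≤ γ (k0 + m) / (1+lam) := hdec m
        _ ≤ (γ k0 * ((1+lam)⁻¹)^m) / (1+lam) := by gcongr
        _ = γ k0 * ((1+lam)⁻¹)^(m+1) := by rw [pow_succ]; field_simp
    -- (k0+n) * r^n → 0
    have hr0 : (0:ℝ) ≤ (1+lam)⁻¹ := by positivity
    have hr1 : (1+lam)⁻¹ < 1 := by
      rw [inv_lt_one_iff₀]; right; exact h1l
    have ht1 : Tendsto (fun n : ℕ => (n:ℝ) * ((1+lam)⁻¹)^n) atTop (nhds 0) :=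
      tendsto_self_mul_const_pow_of_lt_one hr0 hr1
    have ht2 : Tendsto (fun n : ℕ => (k0:ℝ) * ((1+lam)⁻¹)^n) atTop (nhds 0) := by
      have := (tendsto_pow_atTop_nhds_zero_of_lt_one hr0 hr1).const_mul (k0:ℝ)
      simpa using this
    have ht : Tendsto (fun n : ℕ => ((k0:ℝ) + n) * ((1+lam)⁻¹)^n) atTop (nhds 0) := by
      have := ht2.add ht1
      simpa [add_mul] using this
    have hev : ∀ᶠ n : ℕ in atTop, ((k0:ℝ) + n) * ((1+lam)⁻¹)^n < C' / γ k0 := by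
      apply ht.eventually_lt_const
      exact div_pos hC0 (hpos k0)
    obtain ⟨n, hn⟩ := hev.exists
    have hlow' := hglow (k0 + n) (by omega)
    have hgeo' := hgeo n
    have hkn : (0:ℝ) < (k0:ℝ) + n := by positivity
    rw [Nat.cast_add] at hlow'
    have hcomb : C' / ((k0:ℝ) + n) ≤ γ k0 * ((1+lam)⁻¹)^n := hlow'.trans hgeo'
    rw [div_le_iff₀ hkn] at hcomb
    have hg0 := hpos k0
    rw [lt_div_iff₀ hg0] at hn
    nlinarith
  obtain ⟨m, hm1, hm2⟩ := hex
  -- all later terms equal C'/k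
  have hall : ∀ j : ℕ, γ (m + j) = C' / ((m:ℝ) + j) := by
    intro j
    induction j with
    | zero => simpa using hm2
    | succ n ih =>
      have h := hstep (m + n) (by omega) (by rw [ih, Nat.cast_add])
      rw [show m + (n+1) = (m+n)+1 from rfl, h]
      push_cast
      ring
  have hN : ∀ k : ℕ, m < k → γ k = C' / (k:ℝ) := by
    intro k hk
    obtain ⟨j, rfl⟩ : ∃ j, k = m + j := ⟨k - m, by omega⟩
    rw [hall j]; push_cast; ring_nf
  -- tendsto zero
  have heventually : γ =ᶠ[atTop] (fun k : ℕ => C' / (k:ℝ)) :=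
    eventually_atTop.2 ⟨m+1, fun k hk => hN k (by omega)⟩
  have htend0 : Tendsto γ atTop (nhds 0) :=
    (tendsto_const_div_atTop_nhds_zero_nat C').congr' heventually.symm
  -- divergence of the sum
  have hnotsum : ¬ Summable γ := by
    intro hsum
    have h1 : Summable (fun n : ℕ => γ (n + (m+1))) := (summable_nat_add_iff (m+1)).2 hsum
    have h2 : Summable (fun n : ℕ => C' / ((n + (m+1) : ℕ) : ℝ)) := by
      refine h1.congr fun n => ?_
      rw [hN (n + (m+1)) (by omega)]
    have h3 : Summable (fun n : ℕ => C' / (n : ℝ)) := (summable_nat_add_iff (m+1)).1 h2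
    have h3' : Summable (fun n : ℕ => C' * (n:ℝ)⁻¹) := by
      refine h3.congr fun n => ?_
      rw [div_eq_mul_inv]
    exact Real.not_summable_natCast_inv ((summable_mul_left_iff hC0.ne').1 h3')
  have hdiv : Tendsto (fun K : ℕ => ∑ k ∈ Finset.range K, γ k) atTop atTop :=
    (not_summable_iff_tendsto_nat_atTop_of_nonneg (fun n => (hpos n).le)).1 hnotsum
  exact ⟨fun k => ⟨hmono k, hlow k⟩, fun k => ⟨hpos k, hub k⟩, ⟨m, hN⟩, htend0, hdiv⟩
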